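/- Fix rationals q₁/k, q₂/k with 0 < q₁/k < 1/2 and 0 < q₂/k < 1/2, and exponents ε₁, ε₂ ∈ {0,1} with at most one of them nonzero. Then the integral over ℂ of z^{ε₁}(z-1)^{ε₂} / (|z|^{2-2q₁/k} |z-1|^{2-2q₂/k}) with respect to Lebesgue area measure is nonzero (assuming the integrand is integrable). -/

import Mathlib

open MeasureTheory

private lemma abs_sub_one_lt_abs_add_one {z : ℂ} (hz : 0 < z.re) :
    ‖z - 1‖ < ‖z + 1‖ := by
  have h1 : ‖z - 1‖ ^ 2 = (z.re - 1) ^ 2 + z.im ^ 2 := by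
    rw [Complex.sq_norm, Complex.normSq_apply]
    simp [Complex.sub_re, Complex.sub_im]; ring
  have h2 : ‖z + 1‖ ^ 2 = (z.re + 1) ^ 2 + z.im ^ 2 := by
    rw [Complex.sq_norm, Complex.normSq_apply]
    simp [Complex.add_re, Complex.add_im]; ring
  nlinarith [norm_nonneg (z - 1), norm_nonneg (z + 1), hz]

private lemma re_line_null : (volume : Measure ℂ) {z : ℂ | z.re = 0} = 0 := by
  have h : {z : ℂ | z.re = 0} = (LinearMap.ker Complex.reLm : Set ℂ) := by
    ext z; simp [LinearMap.mem_ker]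
  rw [h]
  exact Measure.addHaar_submodule _ _ (fun htop => by
    have : (1 : ℂ) ∈ (LinearMap.ker Complex.reLm : Set ℂ) := by rw [htop]; trivial
    simp [LinearMap.mem_ker] at this)

/-- Positivity of `∫ Re z / (|z|^a |z-1|^b)` for `0 < b`. -/
private lemma integral_re_div_pos (a b : ℝ) (hb : 0 < b) (g : ℂ → ℝ)
    (hg : ∀ z, g z = z.re / (‖z‖ ^ a * ‖z - 1‖ ^ b))
    (hint : Integrable g) : 0 < ∫ z, g z := by
  have mpneg : MeasurePreserving (fun z : ℂ => -z) volume volume :=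
    Measure.measurePreserving_neg _
  set H : Set ℂ := {z | 0 < z.re} with hHdef
  have hHm : MeasurableSet H := measurableSet_lt measurable_const Complex.measurable_re
  have hHo : IsOpen H := isOpen_lt continuous_const Complex.continuous_re
  have hgneg : Integrable (fun z : ℂ => g (-z)) := hint.comp_neg
  -- key pointwise positivity
  have key : ∀ z ∈ H, z ≠ 1 → 0 < g z + g (-z) := by
    intro z hz h1
    have hzre : 0 < z.re := hz
    have hz0 : z ≠ 0 := fun h => by simp [h] at hzre
    rw [hg, hg]
    have e1 : ‖-z‖ = ‖z‖ := norm_neg z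
    have e2 : ‖-z - 1‖ = ‖z + 1‖ := by
      rw [show -z - 1 = -(z + 1) by ring, norm_neg]
    rw [e1, e2, Complex.neg_re]
    set R := ‖z‖ ^ a with hR
    set S := ‖z - 1‖ ^ b with hS
    set T := ‖z + 1‖ ^ b with hT
    have hRpos : 0 < R := Real.rpow_pos_of_pos (norm_pos_iff.mpr hz0) a
    have hSpos : 0 < S := Real.rpow_pos_of_pos (norm_pos_iff.mpr (sub_ne_zero.2 h1)) b
    have hST : S < T :=
      Real.rpow_lt_rpow (norm_nonneg _) (abs_sub_one_lt_abs_add_one hzre) hb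
    have hlt : z.re / (R * T) < z.re / (R * S) :=
      div_lt_div_of_pos_left hzre (by positivity) (mul_lt_mul_of_pos_left hST hRpos)
    rw [neg_div]
    linarith
  have h1null : (volume : Measure ℂ) {(1 : ℂ)} = 0 := measure_singleton 1
  -- split the integral
  have split : ∫ z, g z = (∫ z in H, g z) + ∫ z in Hᶜ, g z :=
    (integral_add_compl hHm hint).symm
  have himg : (fun z : ℂ => -z) '' H = {z : ℂ | z.re < 0} := by
    ext z
    constructor
    · rintro ⟨w, hw, rfl⟩; simpa using (show 0 < w.re from hw)
    · intro hz
      refine ⟨-z, ?_, by simp⟩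
      show 0 < (-z).re
      simpa using hz
  have haes : (Hᶜ : Set ℂ) =ᵐ[volume] ((fun z : ℂ => -z) '' H : Set ℂ) := by
    rw [himg]
    rw [MeasureTheory.ae_eq_set]
    constructor
    · refine measure_mono_null ?_ re_line_null
      intro z hz
      have h1 : ¬ 0 < z.re := hz.1
      have h2 : ¬ z.re < 0 := hz.2
      show z.re = 0
      linarith [not_lt.1 h1, not_lt.1 h2]
    · refine measure_mono_null ?_ (measure_empty (μ := (volume : Measure ℂ)))
      intro z hz
      have h1 : z.re < 0 := hz.1
      have h2 : 0 < z.re := not_not.1 hz.2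
      exact absurd h1 (asymm h2)
  have hstep : ∫ z in Hᶜ, g z = ∫ z in H, g (-z) := by
    rw [setIntegral_congr_set haes]
    exact mpneg.setIntegral_image_emb (MeasurableEquiv.neg ℂ).measurableEmbedding g H
  have hiH : IntegrableOn g H := hint.integrableOn
  have hiH2 : IntegrableOn (fun z : ℂ => g (-z)) H := hgneg.integrableOn
  have hsum : ∫ z, g z = ∫ z in H, (g z + g (-z)) := by
    rw [split, hstep, ← integral_add hiH hiH2]
  rw [hsum]
  have hne1 : ∀ᵐ z : ℂ ∂volume.restrict H, z ≠ 1 :=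
    ae_restrict_of_ae (by
      rw [ae_iff]
      refine measure_mono_null ?_ h1null
      intro z hz
      simpa using hz)
  have hnonneg : 0 ≤ᵐ[volume.restrict H] fun z => g z + g (-z) := by
    filter_upwards [ae_restrict_mem hHm, hne1] with z hzH hz1
    exact (key z hzH hz1).le
  rw [setIntegral_pos_iff_support_of_nonneg_ae hnonneg (hiH.add hiH2)]
  have hsub : H \ {1} ⊆ (Function.support fun z => g z + g (-z)) ∩ H :=
    fun z hz => ⟨ne_of_gt (key z hz.1 hz.2), hz.1⟩
  calc (0 : ENNReal) < volume (H \ {1}) := by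
        rw [measure_diff_null h1null]
        exact hHo.measure_pos volume ⟨1, by simp [hHdef]⟩
    _ ≤ _ := measure_mono hsub

/-- Positivity of `∫ 1 / (|z|^a |z-1|^b)` for `0 < a, b`. -/
private lemma integral_one_div_pos (a b : ℝ) (ha : 0 < a) (hb : 0 < b) (g : ℂ → ℝ)
    (hg : ∀ z, g z = 1 / (‖z‖ ^ a * ‖z - 1‖ ^ b))
    (hint : Integrable g) : 0 < ∫ z, g z := by
  rw [integral_pos_iff_support_of_nonneg_ae
    (Filter.Eventually.of_forall fun z => by rw [hg]; positivity) hint]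
  have hsub : ({0, 1} : Set ℂ)ᶜ ⊆ Function.support g := by
    intro z hz
    simp only [Set.mem_compl_iff, Set.mem_insert_iff, Set.mem_singleton_iff, not_or] at hz
    have h0 : 0 < ‖z‖ ^ a := Real.rpow_pos_of_pos (norm_pos_iff.mpr hz.1) a
    have h1 : 0 < ‖z - 1‖ ^ b :=
      Real.rpow_pos_of_pos (norm_pos_iff.mpr (sub_ne_zero.2 hz.2)) b
    simp only [Function.mem_support, hg]
    positivity
  calc (0 : ENNReal) < volume (({0, 1} : Set ℂ)ᶜ) := by
        rw [Set.compl_eq_univ_diff, measure_diff_null (by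
          refine measure_union_null (measure_singleton 0) (measure_singleton 1))]
        exact isOpen_univ.measure_pos volume ⟨0, trivial⟩
    _ ≤ _ := measure_mono hsub

/-- For rationals `0 < q₁ < 1/2`, `0 < q₂ < 1/2` and exponents `ε₁, ε₂ ∈ {0,1}` with at
most one of them nonzero, the integral over `ℂ` of
`z^ε₁ (z-1)^ε₂ / (|z|^{2-2q₁} |z-1|^{2-2q₂})` with respect to Lebesgue area measure is
nonzero (assuming the integrand is integrable). -/
theorem integral_ne_zero (q₁ q₂ : ℚ) (hq₁ : 0 < q₁) (hq₁' : q₁ < 1/2)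
    (hq₂ : 0 < q₂) (hq₂' : q₂ < 1/2)
    (ε₁ ε₂ : ℕ) (hε₁ : ε₁ ≤ 1) (hε₂ : ε₂ ≤ 1) (hε : ε₁ * ε₂ = 0)
    (f : ℂ → ℂ)
    (hf : ∀ z : ℂ, f z = z ^ ε₁ * (z - 1) ^ ε₂ /
      (((‖z‖ ^ ((2 : ℝ) - 2 * (q₁ : ℝ)) *
         ‖z - 1‖ ^ ((2 : ℝ) - 2 * (q₂ : ℝ)) : ℝ)) : ℂ))
    (hint : Integrable f) :
    ∫ z, f z ≠ 0 := by
  set A : ℝ := (2 : ℝ) - 2 * (q₁ : ℝ) with hAdef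
  set B : ℝ := (2 : ℝ) - 2 * (q₂ : ℝ) with hBdef
  have hq₁R : (q₁ : ℝ) < 1/2 := by
    rw [show (1/2 : ℝ) = ((1/2 : ℚ) : ℝ) by norm_num]
    exact_mod_cast hq₁'
  have hq₂R : (q₂ : ℝ) < 1/2 := by
    rw [show (1/2 : ℝ) = ((1/2 : ℚ) : ℝ) by norm_num]
    exact_mod_cast hq₂'
  have hA : 0 < A := by rw [hAdef]; linarith
  have hB : 0 < B := by rw [hBdef]; linarith
  have hre : ∫ z, (f z).re = (∫ z, f z).re :=
    Complex.reCLM.integral_comp_comm hint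
  have hintre : Integrable fun z => (f z).re := by
    simpa only [RCLike.re_eq_complex_re] using hint.re
  intro hzero
  interval_cases ε₁ <;> interval_cases ε₂
  · -- ε₁ = 0, ε₂ = 0
    have hpos : 0 < ∫ z, (f z).re := by
      refine integral_one_div_pos A B hA hB _ (fun z => ?_) hintre
      rw [hf z]
      simp [Complex.div_ofReal_re]
    rw [hre, hzero] at hpos
    simp at hpos
  · -- ε₁ = 0, ε₂ = 1
    have hco : Integrable (fun z : ℂ => f (1 - z)) := hint.comp_sub_left 1
    have key : ∀ z : ℂ, (f (1 - z)).re =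
        -(z.re / (‖z‖ ^ B * ‖z - 1‖ ^ A)) := by
      intro z
      rw [hf (1 - z)]
      have e0 : (1 : ℂ) - z - 1 = -z := by ring
      have e1 : ‖1 - z‖ = ‖z - 1‖ := by
        rw [show (1 : ℂ) - z = -(z - 1) by ring, norm_neg]
      rw [e0, e1]
      simp only [pow_zero, pow_one, one_mul, norm_neg]
      rw [Complex.div_ofReal_re, Complex.neg_re, neg_div, mul_comm]
    have hintg : Integrable
        (fun z : ℂ => z.re / (‖z‖ ^ B * ‖z - 1‖ ^ A)) := by
      have h1 : Integrable (fun z : ℂ => (f (1 - z)).re) := by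
        simpa only [RCLike.re_eq_complex_re] using hco.re
      have e : (fun z : ℂ => z.re / (‖z‖ ^ B * ‖z - 1‖ ^ A))
          = -(fun z : ℂ => (f (1 - z)).re) := by
        funext z; simp [key]
      rw [e]; exact h1.neg
    have hpos : 0 < ∫ z : ℂ,
        z.re / (‖z‖ ^ B * ‖z - 1‖ ^ A) :=
      integral_re_div_pos B A hA _ (fun z => rfl) hintg
    have hsubst : ∫ z : ℂ, (f z).re = ∫ z : ℂ, (f (1 - z)).re :=
      (integral_sub_left_eq_self (fun z : ℂ => (f z).re) volume 1).symm
    have : ∫ z : ℂ, (f (1 - z)).re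
        = -∫ z : ℂ, z.re / (‖z‖ ^ B * ‖z - 1‖ ^ A) := by
      simp only [key]
      exact integral_neg _
    rw [hzero] at hre
    rw [hsubst, this] at hre
    simp only [Complex.zero_re] at hre
    linarith
  · -- ε₁ = 1, ε₂ = 0
    have hpos : 0 < ∫ z, (f z).re := by
      refine integral_re_div_pos A B hB _ (fun z => ?_) hintre
      rw [hf z]
      simp only [pow_zero, pow_one, mul_one]
      rw [Complex.div_ofReal_re]
    rw [hre, hzero] at hpos
    simp at hpos
  · -- ε₁ = 1, ε₂ = 1 : contradiction
    simp at hε
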